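/- Let A ∈ ℝ^{M×r}, R ∈ ℝ^{M×r'}, b ∈ ℝ^M, with r ≤ r' ≤ M. Let [A | b] = QT be a QR factorization where Q ∈ ℝ^{M×r_Q} has orthonormal columns (so A = Q T_A and b = Q T_b), and assume R^T Q has full column rank (so (R^T Q)^T(R^T Q) is invertible). Define Θ = Q ((R^T Q)^T(R^T Q))^{-1} (R^T Q)^T. Then Θ R^T A = A and Θ R^T b = b, and the spectral norm of Θ equals 1/σ_min(R^T Q). -/

import Mathlib

open scoped BigOperators
open MeasureTheory ProbabilityTheory Matrix

noncomputable def enorm₂ {n : ℕ} (v : Fin n → ℝ) : ℝ :=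
  ‖(WithLp.equiv 2 (Fin n → ℝ)).symm v‖

lemma enorm_eq {n : ℕ} (v : Fin n → ℝ) : enorm₂ v = Real.sqrt (v ⬝ᵥ v) := by
  rw [enorm₂, EuclideanSpace.norm_eq]
  congr 1
  simp [dotProduct, Real.norm_eq_abs, sq_abs, sq]


lemma enorm_continuous {n : ℕ} : Continuous (fun x : Fin n → ℝ => enorm₂ x) := by
  have : Continuous (fun x : Fin n → ℝ => Real.sqrt (x ⬝ᵥ x)) := by
    unfold dotProduct
    exact Real.continuous_sqrt.comp (by continuity)
  simpa [funext enorm_eq] using this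

lemma enorm_nonneg' {n : ℕ} (v : Fin n → ℝ) : 0 ≤ enorm₂ v := by
  rw [enorm_eq]; exact Real.sqrt_nonneg _

lemma dot_self_nonneg {n : ℕ} (v : Fin n → ℝ) : 0 ≤ v ⬝ᵥ v :=
  Finset.sum_nonneg fun i _ => mul_self_nonneg _

lemma enorm_sq {n : ℕ} (v : Fin n → ℝ) : enorm₂ v ^ 2 = v ⬝ᵥ v := by
  rw [enorm_eq, Real.sq_sqrt (dot_self_nonneg v)]

lemma enorm₂_smul {n : ℕ} (c : ℝ) (v : Fin n → ℝ) : enorm₂ (c • v) = |c| * enorm₂ v := by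
  rw [enorm_eq, enorm_eq, smul_dotProduct, dotProduct_smul, smul_eq_mul, smul_eq_mul,
    ← mul_assoc, ← sq, Real.sqrt_mul (sq_nonneg c), Real.sqrt_sq_eq_abs]

lemma dot_mulVec_mulVec {m n : ℕ} (A : Matrix (Fin m) (Fin n) ℝ) (v w : Fin n → ℝ) :
    (A.mulVec v) ⬝ᵥ (A.mulVec w) = v ⬝ᵥ ((Aᵀ * A).mulVec w) := by
  rw [dotProduct_mulVec, dotProduct_mulVec, ← vecMul_transpose, vecMul_vecMul]

lemma enorm_Q_mulVec {m n : ℕ} {Q : Matrix (Fin m) (Fin n) ℝ} (hQ : Qᵀ * Q = 1)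
    (v : Fin n → ℝ) : enorm₂ (Q.mulVec v) = enorm₂ v := by
  rw [enorm_eq, enorm_eq, dot_mulVec_mulVec, hQ, one_mulVec]

-- sphere compactness
lemma sphere_compact {n : ℕ} : IsCompact {x : Fin n → ℝ | enorm₂ x = 1} := by
  have hclosed : IsClosed {x : Fin n → ℝ | enorm₂ x = 1} :=
    isClosed_eq enorm_continuous continuous_const
  have hbdd : Bornology.IsBounded {x : Fin n → ℝ | enorm₂ x = 1} := by
    rw [Metric.isBounded_iff_subset_closedBall 0]
    refine ⟨1, fun x hx => ?_⟩
    simp only [Metric.mem_closedBall, dist_zero_right, pi_norm_le_iff_of_nonneg zero_le_one]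
    intro i
    have h1 : x i * x i ≤ x ⬝ᵥ x := by
      rw [dotProduct]
      exact Finset.single_le_sum (fun j _ => mul_self_nonneg (x j)) (Finset.mem_univ i)
    have h2 : x ⬝ᵥ x = 1 := by
      have := enorm_sq x
      rw [Set.mem_setOf_eq.mp hx] at this; simpa using this.symm
    rw [Real.norm_eq_abs, ← Real.sqrt_mul_self_eq_abs]
    rw [show (1:ℝ) = Real.sqrt 1 by simp]
    exact Real.sqrt_le_sqrt (h2 ▸ h1)
  exact Metric.isCompact_of_isClosed_isBounded hclosed hbdd

lemma enorm_eq_zero_iff {n : ℕ} (v : Fin n → ℝ) : enorm₂ v = 0 ↔ v = 0 := by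
  rw [enorm_eq, Real.sqrt_eq_zero (dot_self_nonneg v), dotProduct_self_eq_zero]

noncomputable def sMax {m n : ℕ} (A : Matrix (Fin m) (Fin n) ℝ) : ℝ :=
  ⨆ x : {x : Fin n → ℝ // enorm₂ x = 1}, enorm₂ (A.mulVec x.1)

noncomputable def sMin {m n : ℕ} (A : Matrix (Fin m) (Fin n) ℝ) : ℝ :=
  ⨅ x : {x : Fin n → ℝ // enorm₂ x = 1}, enorm₂ (A.mulVec x.1)

lemma sMin_smul_le {m n : ℕ} (B : Matrix (Fin m) (Fin n) ℝ) (z : Fin n → ℝ) :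
    sMin B * enorm₂ z ≤ enorm₂ (B.mulVec z) := by
  rcases eq_or_ne z 0 with rfl | hz
  · simp only [(enorm_eq_zero_iff (0 : Fin n → ℝ)).2 rfl, mul_zero, mulVec_zero]
    exact enorm_nonneg' _
  · have hez : 0 < enorm₂ z :=
      lt_of_le_of_ne (enorm_nonneg' z) (fun h => hz ((enorm_eq_zero_iff z).1 h.symm))
    set u : Fin n → ℝ := (enorm₂ z)⁻¹ • z with hu
    have hnu : enorm₂ u = 1 := by
      rw [hu, enorm₂_smul, abs_of_pos (inv_pos.2 hez), inv_mul_cancel₀ hez.ne']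
    have h1 : sMin B ≤ enorm₂ (B.mulVec u) := by
      refine ciInf_le ⟨0, ?_⟩ (⟨u, hnu⟩ : {x : Fin n → ℝ // enorm₂ x = 1})
      rintro y ⟨x, rfl⟩; exact enorm_nonneg' _
    have h2 : enorm₂ (B.mulVec u) = (enorm₂ z)⁻¹ * enorm₂ (B.mulVec z) := by
      rw [hu, mulVec_smul, enorm₂_smul, abs_of_pos (inv_pos.2 hez)]
    rw [h2] at h1
    calc sMin B * enorm₂ z ≤ ((enorm₂ z)⁻¹ * enorm₂ (B.mulVec z)) * enorm₂ z :=
          mul_le_mul_of_nonneg_right h1 hez.le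
      _ = enorm₂ (B.mulVec z) := by field_simp

lemma sMin_attained {m n : ℕ} (B : Matrix (Fin m) (Fin n) ℝ) (hfull : 0 < sMin B) :
    ∃ y : Fin n → ℝ, enorm₂ y = 1 ∧ enorm₂ (B.mulVec y) = sMin B := by
  have hne : Nonempty {x : Fin n → ℝ // enorm₂ x = 1} := by
    by_contra h
    rw [not_nonempty_iff] at h
    rw [sMin, Real.iInf_of_isEmpty] at hfull
    exact lt_irrefl 0 hfull
  have hmv : Continuous (fun x : Fin n → ℝ => B.mulVec x) :=
    (Matrix.mulVecLin B).continuous_of_finiteDimensional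
  have hcont : Continuous (fun x : Fin n → ℝ => enorm₂ (B.mulVec x)) :=
    enorm_continuous.comp hmv
  obtain ⟨y₀, hy₀, hmin⟩ := sphere_compact.exists_isMinOn
    (hne.elim fun x => ⟨x.1, x.2⟩) hcont.continuousOn
  rw [isMinOn_iff] at hmin
  have hbdd : BddBelow (Set.range fun x : {x : Fin n → ℝ // enorm₂ x = 1} =>
      enorm₂ (B.mulVec x.1)) := ⟨0, by rintro y ⟨x, rfl⟩; exact enorm_nonneg' _⟩
  have hmin' : ∀ z : Fin n → ℝ, enorm₂ z = 1 →
      enorm₂ (B.mulVec y₀) ≤ enorm₂ (B.mulVec z) := fun z hz => hmin z hz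
  refine ⟨y₀, hy₀, le_antisymm ?_ ?_⟩
  · exact le_ciInf fun x => hmin' x.1 x.2
  · exact ciInf_le hbdd ⟨y₀, hy₀⟩

lemma key {m n p : ℕ} (Q : Matrix (Fin p) (Fin n) ℝ) (B : Matrix (Fin m) (Fin n) ℝ)
    (hQ : Qᵀ * Q = 1) (hfull : 0 < sMin B) (hInv : IsUnit (Bᵀ * B).det) :
    sMax (Q * (Bᵀ * B)⁻¹ * Bᵀ) = 1 / sMin B := by
  set s := sMin B with hs
  set P : Matrix (Fin n) (Fin m) ℝ := (Bᵀ * B)⁻¹ * Bᵀ with hP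
  have hPB : P * B = 1 := by rw [hP, Matrix.mul_assoc]; exact Matrix.nonsing_inv_mul _ hInv
  -- upper bound
  have hub : ∀ x : Fin m → ℝ, enorm₂ x = 1 → enorm₂ (P.mulVec x) ≤ 1 / s := by
    intro x hx
    set z := P.mulVec x with hz
    set w := x - B.mulVec z with hwdef
    have hBtw : Bᵀ.mulVec w = 0 := by
      have h1 : Bᵀ.mulVec (B.mulVec z) = Bᵀ.mulVec x := by
        rw [hz, mulVec_mulVec, mulVec_mulVec, hP, ← Matrix.mul_assoc,
          Matrix.mul_nonsing_inv _ hInv, Matrix.one_mul]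
      rw [hwdef, mulVec_sub, h1, sub_self]
    have hxeq : x = B.mulVec z + w := by rw [hwdef]; ring
    have hdot : (B.mulVec z) ⬝ᵥ w = 0 := by
      rw [dotProduct_comm, dotProduct_mulVec, ← mulVec_transpose, hBtw, zero_dotProduct]
    have h2 : enorm₂ x ^ 2 = enorm₂ (B.mulVec z) ^ 2 + enorm₂ w ^ 2 := by
      rw [enorm_sq, enorm_sq, enorm_sq, hxeq, add_dotProduct, dotProduct_add, dotProduct_add,
        hdot, dotProduct_comm w (B.mulVec z), hdot]
      ring
    have h3 := sMin_smul_le B z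
    have h4 : enorm₂ (B.mulVec z) ≤ enorm₂ x := by
      nlinarith [enorm_nonneg' (B.mulVec z), enorm_nonneg' w, enorm_nonneg' x]
    rw [le_div_iff₀ hfull]
    calc enorm₂ z * s = s * enorm₂ z := mul_comm _ _
      _ ≤ enorm₂ (B.mulVec z) := h3
      _ ≤ enorm₂ x := h4
      _ = 1 := hx
  -- witness
  obtain ⟨y₀, hy1, hy2⟩ := sMin_attained B hfull
  set x₀ : Fin m → ℝ := s⁻¹ • (B.mulVec y₀) with hx₀def
  have hx₀ : enorm₂ x₀ = 1 := by
    rw [hx₀def, enorm₂_smul, hy2, abs_of_pos (inv_pos.2 hfull), inv_mul_cancel₀ hfull.ne']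
  have hPx₀ : enorm₂ (P.mulVec x₀) = 1 / s := by
    rw [hx₀def, mulVec_smul, mulVec_mulVec, hPB, one_mulVec, enorm₂_smul,
      abs_of_pos (inv_pos.2 hfull), hy1, mul_one, one_div]
  -- rewrite sMax
  have hrw : ∀ x : Fin m → ℝ, enorm₂ ((Q * (Bᵀ * B)⁻¹ * Bᵀ).mulVec x) = enorm₂ (P.mulVec x) := by
    intro x
    rw [show Q * (Bᵀ * B)⁻¹ * Bᵀ = Q * P by rw [hP, Matrix.mul_assoc], ← mulVec_mulVec,
      enorm_Q_mulVec hQ]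
  have hne : Nonempty {x : Fin m → ℝ // enorm₂ x = 1} := ⟨⟨x₀, hx₀⟩⟩
  have hbdd : BddAbove (Set.range fun x : {x : Fin m → ℝ // enorm₂ x = 1} =>
      enorm₂ (P.mulVec x.1)) := ⟨1 / s, by rintro y ⟨x, rfl⟩; exact hub x.1 x.2⟩
  have hmax : sMax (Q * (Bᵀ * B)⁻¹ * Bᵀ)
      = ⨆ x : {x : Fin m → ℝ // enorm₂ x = 1}, enorm₂ (P.mulVec x.1) := by
    rw [sMax]
    exact iSup_congr fun x => hrw x.1
  rw [hmax]
  refine le_antisymm (ciSup_le fun x => hub x.1 x.2) ?_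
  have := le_ciSup hbdd (⟨x₀, hx₀⟩ : {x : Fin m → ℝ // enorm₂ x = 1})
  rwa [hPx₀] at this

theorem stmt_8 {M r r' rQ : ℕ} (hr : r ≤ r') (hr' : r' ≤ M)
    (A : Matrix (Fin M) (Fin r) ℝ) (R : Matrix (Fin M) (Fin r')  ℝ)
    (b : Fin M → ℝ)
    (Q : Matrix (Fin M) (Fin rQ) ℝ) (TA : Matrix (Fin rQ) (Fin r) ℝ) (Tb : Fin rQ → ℝ)
    (hQ : Qᵀ * Q = 1) (hA : A = Q * TA) (hb : b = Q.mulVec Tb)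
    (hfull : 0 < sMin (Rᵀ * Q))
    (hInv : IsUnit ((Rᵀ * Q)ᵀ * (Rᵀ * Q)).det) :
    (Q * ((Rᵀ * Q)ᵀ * (Rᵀ * Q))⁻¹ * (Rᵀ * Q)ᵀ) * (Rᵀ * A) = A ∧
    (Q * ((Rᵀ * Q)ᵀ * (Rᵀ * Q))⁻¹ * (Rᵀ * Q)ᵀ).mulVec (Rᵀ.mulVec b) = b ∧
    sMax (Q * ((Rᵀ * Q)ᵀ * (Rᵀ * Q))⁻¹ * (Rᵀ * Q)ᵀ) = 1 / sMin (Rᵀ * Q) := by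
  set B := Rᵀ * Q with hB
  have hinv : (Bᵀ * B)⁻¹ * (Bᵀ * B) = 1 := Matrix.nonsing_inv_mul _ hInv
  have hkey : Q * (Bᵀ * B)⁻¹ * Bᵀ * B = Q := by
    rw [Matrix.mul_assoc (Q * (Bᵀ * B)⁻¹), Matrix.mul_assoc Q, hinv, Matrix.mul_one]
  have hkey2 : Q * (Bᵀ * B)⁻¹ * Bᵀ * Rᵀ * Q = Q := by
    rw [Matrix.mul_assoc (Q * (Bᵀ * B)⁻¹ * Bᵀ), ← hB, hkey]
  refine ⟨?_, ?_, key Q B hQ hfull hInv⟩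
  · rw [hA]
    simp only [← Matrix.mul_assoc]
    rw [hkey2]
  · rw [hb, mulVec_mulVec, mulVec_mulVec, hkey2]
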